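/- Let ℓmin, ℓmax be positive reals with ℓmin ≤ ℓmax, ρ = ℓmax/ℓmin, γ̄ = ⌊ρ⌋ and γ̂ = ⌈ρ⌉ − 1. Let r₂ : ℕ → ℕ be supported on {1, …, γ̄} and r₁ : ℕ → ℕ be supported on {1, …, γ̂}, and assume ℓmax · ∑_{j=1}^{γ̄} r₂ j + ℓmin · ∑_{j=1}^{γ̂} j · r₁ j > 0. Then (ℓmin · ∑_{j=1}^{γ̄} j · r₂ j) / (ℓmax · ∑_{j=1}^{γ̄} r₂ j + ℓmin · ∑_{j=1}^{γ̂} j · r₁ j) ≤ γ̄ / ρ. -/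

import Mathlib

/-- Algebraic core of the stochastic-arrivals upper bound: no algorithm has relative
throughput larger than `γ̄/ρ`. -/
theorem relative_throughput_stochastic_upper_bound
    (ℓmin ℓmax : ℝ) (hℓmin : 0 < ℓmin) (hle : ℓmin ≤ ℓmax)
    (ρ : ℝ) (hρ : ρ = ℓmax / ℓmin)
    (γbar γhat : ℕ) (hγbar : γbar = ⌊ρ⌋₊) (hγhat : γhat = ⌈ρ⌉₊ - 1)
    (r₁ r₂ : ℕ → ℕ)
    (hsupp₂ : ∀ j : ℕ, (j = 0 ∨ γbar < j) → r₂ j = 0)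
    (hsupp₁ : ∀ j : ℕ, (j = 0 ∨ γhat < j) → r₁ j = 0)
    (hpos : 0 < ℓmax * (∑ j ∈ Finset.Icc 1 γbar, (r₂ j : ℝ))
              + ℓmin * (∑ j ∈ Finset.Icc 1 γhat, (j : ℝ) * (r₁ j : ℝ))) :
    (ℓmin * ∑ j ∈ Finset.Icc 1 γbar, (j : ℝ) * (r₂ j : ℝ)) /
      (ℓmax * (∑ j ∈ Finset.Icc 1 γbar, (r₂ j : ℝ))
        + ℓmin * (∑ j ∈ Finset.Icc 1 γhat, (j : ℝ) * (r₁ j : ℝ)))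
      ≤ (γbar : ℝ) / ρ := by
  have hℓmax : 0 < ℓmax := lt_of_lt_of_le hℓmin hle
  have hρpos : 0 < ρ := by rw [hρ]; positivity
  set A : ℝ := ∑ j ∈ Finset.Icc 1 γbar, (r₂ j : ℝ) with hA
  set B : ℝ := ∑ j ∈ Finset.Icc 1 γbar, (j : ℝ) * (r₂ j : ℝ) with hBdef
  set C : ℝ := ∑ j ∈ Finset.Icc 1 γhat, (j : ℝ) * (r₁ j : ℝ) with hCdef
  have hB : B ≤ (γbar : ℝ) * A := by
    rw [hBdef, hA, Finset.mul_sum]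
    refine Finset.sum_le_sum fun j hj => ?_
    have hj2 : j ≤ γbar := (Finset.mem_Icc.mp hj).2
    exact mul_le_mul_of_nonneg_right (by exact_mod_cast hj2) (Nat.cast_nonneg _)
  have hC : 0 ≤ C := Finset.sum_nonneg fun j _ => by positivity
  rw [div_le_div_iff₀ hpos hρpos]
  have hsub : ℓmin * B * ρ = ℓmax * B := by rw [hρ]; field_simp
  rw [hsub]
  nlinarith [mul_le_mul_of_nonneg_left hB hℓmax.le,
    mul_nonneg (mul_nonneg (Nat.cast_nonneg γbar : (0:ℝ) ≤ γbar) hℓmin.le) hC]
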